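/- Let R be a commutative ring of prime characteristic p and 𝔞 an ideal of R. Define the k-th Frobenius power 𝔞^[k] for k ∈ ℕ by writing k = k₀ + k₁p + ⋯ + k_r p^r in base p and setting 𝔞^[k] = 𝔞^{k₀} · (𝔞^[p])^{k₁} · ⋯ · (𝔞^[p^r])^{k_r}, where 𝔞^[q] for q a power of p is the ideal generated by q-th powers of elements of 𝔞. Then 𝔞^[k] ⊆ 𝔞^k, and equality holds if 𝔞 is principal. -/

import Mathlib

open scoped BigOperators

/-- The `q`-th bracket power of an ideal: the ideal generated by `q`-th powers
of elements of `a`. -/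
def bracketPow {R : Type*} [CommRing R] (a : Ideal R) (q : ℕ) : Ideal R :=
  Ideal.span ((fun x => x ^ q) '' (a : Set R))

/-- The generalized `k`-th Frobenius power of an ideal, defined via the base-`p`
digits of `k`:  `𝔞^[k] = ∏ᵢ (𝔞^[pⁱ])^(kᵢ)` where `kᵢ = k / pⁱ % p` is the `i`-th
base-`p` digit of `k` (digits with index `> k` vanish, so the product below suffices). -/
def frobPow {R : Type*} [CommRing R] (p : ℕ) (a : Ideal R) (k : ℕ) : Ideal R :=
  ∏ i ∈ Finset.range (k + 1), bracketPow a (p ^ i) ^ (k / p ^ i % p)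

lemma digit_sum (p k : ℕ) (hp : 1 < p) (n : ℕ) :
    ∑ i ∈ Finset.range n, p ^ i * (k / p ^ i % p) = k % p ^ n := by
  induction n with
  | zero => simp [Nat.mod_one]
  | succ n ih =>
    rw [Finset.sum_range_succ, ih]
    have h1 : k / p ^ n % p = k % p ^ (n + 1) / p ^ n := by
      rw [pow_succ, Nat.mod_mul_right_div_self]
    have h2 : k % p ^ (n + 1) % p ^ n = k % p ^ n :=
      Nat.mod_mod_of_dvd _ (pow_dvd_pow p n.le_succ)
    rw [h1, ← h2, mul_comm]
    exact Nat.mod_add_div' _ _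

lemma digit_sum_self (p k : ℕ) (hp : 1 < p) :
    ∑ i ∈ Finset.range (k + 1), p ^ i * (k / p ^ i % p) = k := by
  rw [digit_sum p k hp]
  exact Nat.mod_eq_of_lt (lt_of_lt_of_le (Nat.lt_pow_self (n := k) hp) (pow_le_pow_right₀ hp.le k.le_succ))

lemma bracketPow_le {R : Type*} [CommRing R] (a : Ideal R) (q : ℕ) :
    bracketPow a q ≤ a ^ q := by
  rw [bracketPow, Ideal.span_le]
  rintro _ ⟨x, hx, rfl⟩
  exact Ideal.pow_mem_pow hx q

lemma bracketPow_principal {R : Type*} [CommRing R] (a : Ideal R)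
    (ha : a.IsPrincipal) (q : ℕ) : bracketPow a q = a ^ q := by
  refine le_antisymm (bracketPow_le a q) ?_
  obtain ⟨x, rfl⟩ := ha
  rw [Ideal.submodule_span_eq, Ideal.span_singleton_pow, Ideal.span_le,
    Set.singleton_subset_iff]
  exact Ideal.subset_span ⟨x, Ideal.mem_span_singleton_self x, rfl⟩

lemma ideal_prod_le_prod {R : Type*} [CommRing R] {ι : Type*} (s : Finset ι)
    (f g : ι → Ideal R) (h : ∀ i ∈ s, f i ≤ g i) : ∏ i ∈ s, f i ≤ ∏ i ∈ s, g i := by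
  classical
  induction s using Finset.induction with
  | empty => simp
  | insert _ _ hx ih =>
    rw [Finset.prod_insert hx, Finset.prod_insert hx]
    exact Ideal.mul_mono (h _ (Finset.mem_insert_self _ _))
      (ih fun i hi => h i (Finset.mem_insert_of_mem hi))

theorem stmt_2 {R : Type*} [CommRing R] (p : ℕ) (hp : p.Prime) [CharP R p]
    (a : Ideal R) (k : ℕ) :
    frobPow p a k ≤ a ^ k ∧ (a.IsPrincipal → frobPow p a k = a ^ k) := by
  have key : ∏ i ∈ Finset.range (k + 1), (a ^ p ^ i) ^ (k / p ^ i % p) = a ^ k := by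
    have : ∀ i ∈ Finset.range (k + 1),
        (a ^ p ^ i) ^ (k / p ^ i % p) = a ^ (p ^ i * (k / p ^ i % p)) := by
      intro i _; rw [← pow_mul]
    rw [Finset.prod_congr rfl this, Finset.prod_pow_eq_pow_sum,
      digit_sum_self p k hp.one_lt]
  constructor
  · calc frobPow p a k ≤ ∏ i ∈ Finset.range (k + 1), (a ^ p ^ i) ^ (k / p ^ i % p) := by
          exact ideal_prod_le_prod _ _ _ fun i _ =>
            pow_le_pow_left' (bracketPow_le a (p ^ i)) _
      _ = a ^ k := key
  · intro ha
    rw [frobPow, Finset.prod_congr rfl fun i _ => by rw [bracketPow_principal a ha], key]
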